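/- Let p ≥ 2, 0 < α ≤ 1/2, θ ∈ (0,1), r_0 > 0 and L ≥ (32 α ln 32 / θ)^α, and set ω(r) = L (p + ln(r_0/r))^{-α} for 0 < r ≤ r_0 and r_i = 32^{-i} r_0 for integers i ≥ 0. Let (a_i)_{i≥0} be a nonincreasing sequence of nonnegative real numbers such that a_0 ≤ ω(r_0) and such that for every i ≥ 0, if ω(r_i) ≤ a_i then a_{i+1} ≤ a_i − θ ω(r_i)^{1 + 1/α}. Then a_i ≤ 32 ω(r_i) for every i ≥ 0. -/

import Mathlib

/-- The real-analytic iteration at the heart of the derivation of the logarithmic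
modulus of continuity for the two-phase Stefan problem. -/
theorem stefan_oscillation_iteration
    (p α θ r₀ L : ℝ) (hp : 2 ≤ p) (hα0 : 0 < α) (hα : α ≤ 1 / 2)
    (hθ0 : 0 < θ) (hθ1 : θ < 1) (hr₀ : 0 < r₀)
    (hL : (32 * α * Real.log 32 / θ) ^ α ≤ L)
    (ω : ℝ → ℝ)
    (hω : ∀ r ∈ Set.Ioc (0 : ℝ) r₀, ω r = L * (p + Real.log (r₀ / r)) ^ (-α))
    (r : ℕ → ℝ) (hr : ∀ i : ℕ, r i = r₀ / 32 ^ i)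
    (a : ℕ → ℝ)
    (ha_nonneg : ∀ i, 0 ≤ a i)
    (ha_anti : ∀ i, a (i + 1) ≤ a i)
    (ha0 : a 0 ≤ ω (r 0))
    (hstep : ∀ i, ω (r i) ≤ a i → a (i + 1) ≤ a i - θ * ω (r i) ^ (1 + 1 / α)) :
    ∀ i, a i ≤ 32 * ω (r i) := by
  classical
  set c : ℝ := Real.log 32 with hc
  have hc0 : (0:ℝ) < c := Real.log_pos (by norm_num)
  have hc31 : c ≤ 31 := by
    have := Real.log_le_sub_one_of_pos (show (0:ℝ) < 32 by norm_num)
    linarith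
  have hα1 : α ≤ 1 := by linarith
  have hLarg : (0:ℝ) < 32 * α * c / θ := by positivity
  have hL0 : (0:ℝ) < L := lt_of_lt_of_le (Real.rpow_pos_of_pos hLarg α) hL
  -- the base p + i*c
  have hx2 : ∀ i : ℕ, (2:ℝ) ≤ p + i * c := by
    intro i
    have : (0:ℝ) ≤ (i:ℝ) * c := by positivity
    linarith
  have hx0 : ∀ i : ℕ, (0:ℝ) < p + i * c := fun i => lt_of_lt_of_le (by norm_num) (hx2 i)
  -- closed form for ω (r i)
  have hW : ∀ i : ℕ, ω (r i) = L * (p + i * c) ^ (-α) := by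
    intro i
    have h32 : (0:ℝ) < (32:ℝ) ^ i := by positivity
    have hri : r i ∈ Set.Ioc (0:ℝ) r₀ := by
      rw [hr i]
      constructor
      · positivity
      · rw [div_le_iff₀ h32]
        nlinarith [one_le_pow₀ (show (1:ℝ) ≤ 32 by norm_num) (n := i)]
    have hdiv : r₀ / r i = (32:ℝ) ^ i := by
      rw [hr i]
      field_simp
    rw [hω _ hri, hdiv, Real.log_pow]
  have hWpos : ∀ i : ℕ, 0 < ω (r i) := by
    intro i
    rw [hW i]
    positivity
  have hWanti : ∀ i : ℕ, ω (r (i + 1)) ≤ ω (r i) := by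
    intro i
    rw [hW i, hW (i + 1)]
    have hb : p + (i:ℝ) * c ≤ p + ((i:ℕ) + 1 : ℕ) * c := by
      push_cast; nlinarith
    have := Real.rpow_le_rpow_of_nonpos (hx0 i) hb (neg_nonpos.mpr hα0.le)
    nlinarith
  -- the ratio bound ω (r i) ≤ 32 ω (r (i+1))
  have hWratio : ∀ i : ℕ, ω (r i) ≤ 32 * ω (r (i + 1)) := by
    intro i
    set s : ℝ := p + i * c with hs
    set t : ℝ := p + ((i:ℕ) + 1 : ℕ) * c with ht
    have hs0 : (0:ℝ) < s := hx0 i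
    have ht0 : (0:ℝ) < t := hx0 (i + 1)
    have hts : t ≤ 32 * s := by
      have : t = s + c := by rw [hs, ht]; push_cast; ring
      nlinarith [hx2 i]
    have h1 : t ^ α ≤ 32 * s ^ α := by
      calc t ^ α ≤ (32 * s) ^ α :=
            Real.rpow_le_rpow ht0.le hts hα0.le
        _ = (32:ℝ) ^ α * s ^ α := Real.mul_rpow (by norm_num) hs0.le
        _ ≤ 32 * s ^ α := by
            have h32 : (32:ℝ) ^ α ≤ (32:ℝ) ^ (1:ℝ) :=
              Real.rpow_le_rpow_of_exponent_le (by norm_num) hα1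
            rw [Real.rpow_one] at h32
            have := Real.rpow_pos_of_pos hs0 α
            nlinarith
    have hinv : s ^ (-α) ≤ 32 * t ^ (-α) := by
      rw [Real.rpow_neg hs0.le, Real.rpow_neg ht0.le]
      have hsa : (0:ℝ) < s ^ α := Real.rpow_pos_of_pos hs0 α
      have hta : (0:ℝ) < t ^ α := Real.rpow_pos_of_pos ht0 α
      have h1' : t ^ α / 32 ≤ s ^ α := by linarith
      calc (s ^ α)⁻¹ ≤ (t ^ α / 32)⁻¹ := by
            apply inv_anti₀ (by positivity) h1'
        _ = 32 * (t ^ α)⁻¹ := by rw [inv_div]; ring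
    rw [hW i, hW (i + 1)]
    calc L * s ^ (-α) ≤ L * (32 * t ^ (-α)) := by
          exact mul_le_mul_of_nonneg_left hinv hL0.le
      _ = 32 * (L * t ^ (-α)) := by ring
  -- the key step bound: 32 (ω_i − ω_{i+1}) ≤ θ ω_i^{1+1/α}
  have hKey : ∀ i : ℕ, 32 * (ω (r i) - ω (r (i + 1))) ≤ θ * ω (r i) ^ (1 + 1 / α) := by
    intro i
    set s : ℝ := p + i * c with hs
    set t : ℝ := p + ((i:ℕ) + 1 : ℕ) * c with ht
    have hs0 : (0:ℝ) < s := hx0 i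
    have ht0 : (0:ℝ) < t := hx0 (i + 1)
    have hts : t = s + c := by rw [hs, ht]; push_cast; ring
    have hst : s ≤ t := by rw [hts]; linarith
    -- Bernoulli: t^α ≤ s^α + α c s^(α-1)
    have hBern : t ^ α ≤ s ^ α + α * c * s ^ (α - 1) := by
      have hcs : (0:ℝ) ≤ c / s := by positivity
      have h1 : (1 + c / s) ^ α ≤ 1 + α * (c / s) :=
        rpow_one_add_le_one_add_mul_self (by linarith) hα0.le hα1
      have ht' : t = s * (1 + c / s) := by
        field_simp [hts]
        exact hts
      have h2 : t ^ α = s ^ α * (1 + c / s) ^ α := by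
        rw [ht', Real.mul_rpow hs0.le (by linarith)]
      have hsa : (0:ℝ) < s ^ α := Real.rpow_pos_of_pos hs0 α
      have h3 : s ^ α * (1 + α * (c / s)) = s ^ α + α * c * s ^ (α - 1) := by
        have : s ^ (α - 1) = s ^ α / s := by
          rw [Real.rpow_sub hs0, Real.rpow_one]
        rw [this]
        field_simp
      calc t ^ α = s ^ α * (1 + c / s) ^ α := h2
        _ ≤ s ^ α * (1 + α * (c / s)) := by nlinarith
        _ = s ^ α + α * c * s ^ (α - 1) := h3
    have hsa : (0:ℝ) < s ^ α := Real.rpow_pos_of_pos hs0 α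
    have hta : (0:ℝ) < t ^ α := Real.rpow_pos_of_pos ht0 α
    have hsta : s ^ α ≤ t ^ α := Real.rpow_le_rpow hs0.le hst hα0.le
    -- s^(-α) - t^(-α) ≤ α c s^(-1-α)
    have hdiff : s ^ (-α) - t ^ (-α) ≤ α * c * s ^ (-1 - α) := by
      rw [Real.rpow_neg hs0.le, Real.rpow_neg ht0.le]
      have heq : (s ^ α)⁻¹ - (t ^ α)⁻¹ = (t ^ α - s ^ α) / (s ^ α * t ^ α) := by
        field_simp
      rw [heq]
      have hbound : (t ^ α - s ^ α) / (s ^ α * t ^ α)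
          ≤ (α * c * s ^ (α - 1)) / (s ^ α * s ^ α) := by
        apply div_le_div₀ (by positivity) (by linarith) (by positivity)
        exact mul_le_mul_of_nonneg_left hsta hsa.le
      have heq2 : (α * c * s ^ (α - 1)) / (s ^ α * s ^ α) = α * c * s ^ (-1 - α) := by
        have hss : s ^ (α - 1) / (s ^ α * s ^ α) = s ^ (-1 - α) := by
          rw [← Real.rpow_add hs0, ← Real.rpow_sub hs0]
          congr 1
          ring
        rw [mul_div_assoc, hss]
      rw [heq2] at hbound
      exact hbound
    -- θ L^(1/α) ≥ 32 α c
    have hLpow : 32 * α * c ≤ θ * L ^ (1 / α) := by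
      have h1 : ((32 * α * c / θ) ^ α) ^ (1 / α) ≤ L ^ (1 / α) :=
        Real.rpow_le_rpow (Real.rpow_nonneg hLarg.le α) hL (by positivity)
      have h2 : ((32 * α * c / θ) ^ α) ^ (1 / α) = 32 * α * c / θ := by
        rw [← Real.rpow_mul hLarg.le, mul_one_div_cancel hα0.ne', Real.rpow_one]
      rw [h2] at h1
      rw [div_le_iff₀ hθ0] at h1
      linarith [mul_le_mul_of_nonneg_left h1 hθ0.le]
    -- ω_i^(1+1/α) = L^(1+1/α) * s^(-α-1)
    have hWpow : ω (r i) ^ (1 + 1 / α) = L ^ (1 + 1 / α) * s ^ (-1 - α) := by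
      rw [hW i, ← hs, Real.mul_rpow hL0.le (Real.rpow_nonneg hs0.le _),
        ← Real.rpow_mul hs0.le]
      congr 2
      field_simp
      ring
    have hLsplit : L ^ (1 + 1 / α) = L * L ^ (1 / α) := by
      rw [Real.rpow_add hL0, Real.rpow_one]
    have hspos : (0:ℝ) < s ^ (-1 - α) := Real.rpow_pos_of_pos hs0 _
    have hfin : 32 * (L * (s ^ (-α) - t ^ (-α))) ≤ θ * (L * L ^ (1/α) * s ^ (-1 - α)) := by
      have h1 : 32 * (L * (s ^ (-α) - t ^ (-α))) ≤ 32 * (L * (α * c * s ^ (-1 - α))) := by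
        have := mul_le_mul_of_nonneg_left hdiff hL0.le
        linarith
      have h2 : 32 * (L * (α * c * s ^ (-1 - α))) = (32 * α * c) * (L * s ^ (-1 - α)) := by
        ring
      have h3 : (32 * α * c) * (L * s ^ (-1 - α)) ≤ (θ * L ^ (1/α)) * (L * s ^ (-1 - α)) := by
        apply mul_le_mul_of_nonneg_right hLpow (by positivity)
      calc 32 * (L * (s ^ (-α) - t ^ (-α))) ≤ 32 * (L * (α * c * s ^ (-1 - α))) := h1
        _ = (32 * α * c) * (L * s ^ (-1 - α)) := h2
        _ ≤ (θ * L ^ (1/α)) * (L * s ^ (-1 - α)) := h3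
        _ = θ * (L * L ^ (1/α) * s ^ (-1 - α)) := by ring
    rw [hWpow, hLsplit, hW i, hW (i + 1), ← hs, ← ht]
    calc 32 * (L * s ^ (-α) - L * t ^ (-α)) = 32 * (L * (s ^ (-α) - t ^ (-α))) := by ring
      _ ≤ θ * (L * L ^ (1/α) * s ^ (-1 - α)) := hfin
  -- main argument by contradiction
  intro N
  by_contra hcon
  push_neg at hcon
  obtain ⟨m, hmN, hPm, hmax'⟩ :
      ∃ m, m ≤ N ∧ a m ≤ ω (r m) ∧ ∀ k, m < k → k ≤ N → ¬ (a k ≤ ω (r k)) :=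
    ⟨Nat.findGreatest (fun i => a i ≤ ω (r i)) N, Nat.findGreatest_le N,
      Nat.findGreatest_spec (P := fun i => a i ≤ ω (r i)) (Nat.zero_le N) ha0,
      fun k hk1 hk2 =>
        Nat.findGreatest_is_greatest (P := fun i => a i ≤ ω (r i)) hk1 hk2⟩
  have hPN : ¬ (a N ≤ ω (r N)) := by
    intro h
    have := hWpos N
    linarith
  have hmltN : m < N := by
    rcases lt_or_eq_of_le hmN with h | h
    · exact h
    · exact absurd (h ▸ hPm) hPN
  have hmax : ∀ k, m < k → k ≤ N → ω (r k) ≤ a k :=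
    fun k hk1 hk2 => le_of_not_ge (hmax' k hk1 hk2)
  -- telescoping claim
  have hclaim : ∀ k, m + 1 ≤ k → k ≤ N →
      a k ≤ ω (r m) - 32 * (ω (r (m + 1)) - ω (r k)) := by
    intro k hk
    induction k, hk using Nat.le_induction with
    | base =>
      intro _
      linarith [ha_anti m]
    | succ k hk IH =>
      intro hkN
      have hkN' : k ≤ N := le_trans (Nat.le_succ k) hkN
      have hIH := IH hkN'
      have hωk : ω (r k) ≤ a k := hmax k (by omega) hkN'
      have hs := hstep k hωk
      have hK := hKey k
      linarith
  have hfinal := hclaim N (by omega) le_rfl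
  have hratio := hWratio m
  linarith
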